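/- For p = 3 and every n ≥ 1, the characteristic polynomial P_n of A_n factors as P_n = (X − 6) · ∏_{i=0}^{n−1} (F^{∘i} + 2) · ∏_{i=0}^{n−1} (F^{∘i} − 4)^{2·4^{n−i−1}}, where F = X² − 4X − 6 ∈ ℝ[X] and F^{∘i} denotes the i-fold composition of F with itself (F^{∘0} = X). -/

import Mathlib

open Polynomial Matrix

/-- The action of the generator `e_i` of the star automaton group `𝒢_{S_p}` on
words of length `n` over the alphabet `X = {0, 1, …, p}`. -/
def starWord (p : ℕ) (i : Fin (p + 1)) : (n : ℕ) → (Fin n → Fin (p + 1)) → Fin n → Fin (p + 1)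
  | 0, w => w
  | n + 1, w =>
    if w 0 = 0 then Fin.cons i (starWord p i n (Fin.tail w))
    else if w 0 = i then Fin.cons 0 (Fin.tail w)
    else w

/-- The real permutation matrix of `e_i^{(n)}`. -/
noncomputable def starMat (p n : ℕ) (i : Fin (p + 1)) :
    Matrix (Fin n → Fin (p + 1)) (Fin n → Fin (p + 1)) ℝ :=
  fun u v => if starWord p i n u = v then 1 else 0

/-- The adjacency matrix `A_n = Σ_{i=1}^p (M_{i,n} + M_{i,n}ᵀ)` of the `n`-th
Schreier graph of the star automaton group `𝒢_{S_p}`. -/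
noncomputable def starAdj (p n : ℕ) :
    Matrix (Fin n → Fin (p + 1)) (Fin n → Fin (p + 1)) ℝ :=
  ∑ i : Fin p, (starMat p n i.succ + (starMat p n i.succ)ᵀ)

/-- The `i`-fold composition `F^{∘i}` of a polynomial with itself, with `F^{∘0} = X`. -/
noncomputable def polyIter (F : Polynomial ℝ) : ℕ → Polynomial ℝ
  | 0 => X
  | n + 1 => F.comp (polyIter F n)

def starInv (p : ℕ) (i : Fin (p + 1)) : (n : ℕ) → (Fin n → Fin (p + 1)) → Fin n → Fin (p + 1)
  | 0, w => w
  | n + 1, w =>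
    if w 0 = i then Fin.cons 0 (starInv p i n (Fin.tail w))
    else if w 0 = 0 then Fin.cons i (Fin.tail w)
    else w

lemma starInv_starWord (p : ℕ) (i : Fin (p + 1)) (hi : i ≠ 0) (n : ℕ) (w : Fin n → Fin (p + 1)) :
    starInv p i n (starWord p i n w) = w := by
  induction n with
  | zero => rfl
  | succ n ih =>
    by_cases h1 : w 0 = 0
    · rw [starWord, if_pos h1, starInv]
      simp only [Fin.cons_zero, Fin.tail_cons, if_true, eq_self_iff_true, ih]
      rw [← h1, Fin.cons_self_tail]
    · by_cases h2 : w 0 = i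
      · rw [starWord, if_neg h1, if_pos h2, starInv]
        simp only [Fin.cons_zero, Fin.tail_cons, if_neg (Ne.symm hi), if_true, eq_self_iff_true]
        rw [← h2, Fin.cons_self_tail]
      · rw [starWord, if_neg h1, if_neg h2, starInv, if_neg h2, if_neg h1]

lemma starWord_inj (p : ℕ) (i : Fin (p + 1)) (hi : i ≠ 0) (n : ℕ) :
    Function.Injective (starWord p i n) :=
  Function.LeftInverse.injective (starInv_starWord p i hi n)

lemma starMat_mul_transpose (p n : ℕ) (i : Fin (p + 1)) (hi : i ≠ 0) :
    starMat p n i * (starMat p n i)ᵀ = 1 := by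
  ext u v
  simp only [Matrix.mul_apply, starMat, Matrix.transpose_apply, ite_mul, one_mul, zero_mul,
    Finset.sum_ite_eq, Finset.mem_univ, if_true, Matrix.one_apply]
  by_cases h : u = v
  · simp [h]
  · rw [if_neg h, if_neg (fun he => h ((starWord_inj p i hi n) he.symm))]



def splitE (n : ℕ) : ((Fin n → Fin 4) ⊕ (Fin 3 × (Fin n → Fin 4))) ≃ (Fin (n + 1) → Fin 4) where
  toFun x := Sum.elim (fun y => Fin.cons 0 y) (fun iz => Fin.cons iz.1.succ iz.2) x
  invFun u := if h : u 0 = 0 then Sum.inl (Fin.tail u)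
    else Sum.inr ((u 0).pred h, Fin.tail u)
  left_inv x := by
    rcases x with y | ⟨i, z⟩
    · simp
    · simp [Fin.succ_ne_zero]
  right_inv u := by
    dsimp only
    by_cases h : u 0 = 0
    · rw [dif_pos h]
      simp only [Sum.elim_inl]
      conv_rhs => rw [← Fin.cons_self_tail u]
      rw [h]
    · rw [dif_neg h]
      simp only [Sum.elim_inr, Fin.succ_pred]
      exact Fin.cons_self_tail u

lemma starWord_cons (p : ℕ) (i : Fin (p + 1)) (n : ℕ) (a : Fin (p + 1)) (w : Fin n → Fin (p + 1)) :
    starWord p i (n + 1) (Fin.cons a w) =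
      if a = 0 then Fin.cons i (starWord p i n w)
      else if a = i then Fin.cons 0 w else Fin.cons a w := by
  rw [starWord]
  simp only [Fin.cons_zero, Fin.tail_cons]

lemma starAdj_apply (m : ℕ) (u v : Fin m → Fin 4) :
    starAdj 3 m u v = ∑ j : Fin 3,
      ((if starWord 3 j.succ m u = v then (1 : ℝ) else 0) +
       (if starWord 3 j.succ m v = u then (1 : ℝ) else 0)) := by
  simp [starAdj, starMat, Matrix.sum_apply, Matrix.transpose_apply]

noncomputable def starR (n : ℕ) :
    Matrix (Fin n → Fin 4) (Fin 3 × (Fin n → Fin 4)) ℝ :=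
  fun y iz => (starMat 3 n iz.1.succ + 1) y iz.2

lemma zero_ne_succ' {m : ℕ} (j : Fin m) : (0 : Fin (m+1)) ≠ j.succ :=
  (Fin.succ_ne_zero j).symm

lemma adj_submatrix (n : ℕ) :
    (starAdj 3 (n + 1)).submatrix (splitE n) (splitE n) =
      fromBlocks 0 (starR n) (starR n)ᵀ ((4 : ℝ) • 1) := by
  ext a b
  rcases a with y | ⟨i, z⟩ <;> rcases b with y' | ⟨i', z'⟩
  · simp [splitE, starAdj_apply, starWord_cons, Fin.cons_inj, Fin.succ_ne_zero]
  · -- (inl, inr)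
    have hterm : ∀ j : Fin 3,
        ((if starWord 3 j.succ (n+1) (Fin.cons 0 y) = Fin.cons i'.succ z' then (1:ℝ) else 0) +
         (if starWord 3 j.succ (n+1) (Fin.cons i'.succ z') = Fin.cons 0 y then (1:ℝ) else 0)) =
        if j = i' then ((if starWord 3 i'.succ n y = z' then (1:ℝ) else 0) +
          (if z' = y then (1:ℝ) else 0)) else 0 := by
      intro j
      rcases eq_or_ne j i' with rfl | hne
      · simp [starWord_cons, Fin.cons_inj, Fin.succ_ne_zero]
      · simp [starWord_cons, Fin.cons_inj, Fin.succ_ne_zero, hne, hne.symm,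
          fun h => hne (Fin.succ_injective _ h)]
    rw [Matrix.submatrix_apply]
    have e1 : splitE n (Sum.inl y) = Fin.cons 0 y := rfl
    have e2 : splitE n (Sum.inr (i', z')) = Fin.cons i'.succ z' := rfl
    rw [e1, e2, starAdj_apply, Finset.sum_congr rfl (fun j _ => hterm j), Finset.sum_ite_eq']
    simp [starR, starMat, Matrix.one_apply, eq_comm]
  · -- (inr, inl)
    have hterm : ∀ j : Fin 3,
        ((if starWord 3 j.succ (n+1) (Fin.cons i.succ z) = Fin.cons 0 y' then (1:ℝ) else 0) +
         (if starWord 3 j.succ (n+1) (Fin.cons 0 y') = Fin.cons i.succ z then (1:ℝ) else 0)) =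
        if j = i then ((if z = y' then (1:ℝ) else 0) +
          (if starWord 3 i.succ n y' = z then (1:ℝ) else 0)) else 0 := by
      intro j
      rcases eq_or_ne j i with rfl | hne
      · simp [starWord_cons, Fin.cons_inj, Fin.succ_ne_zero]
      · simp [starWord_cons, Fin.cons_inj, Fin.succ_ne_zero, hne, hne.symm,
          fun h => hne (Fin.succ_injective _ h)]
    rw [Matrix.submatrix_apply]
    have e1 : splitE n (Sum.inr (i, z)) = Fin.cons i.succ z := rfl
    have e2 : splitE n (Sum.inl y') = Fin.cons 0 y' := rfl
    rw [e1, e2, starAdj_apply, Finset.sum_congr rfl (fun j _ => hterm j), Finset.sum_ite_eq']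
    simp [starR, starMat, Matrix.one_apply, Matrix.transpose_apply, eq_comm, add_comm]
  · -- (inr, inr)
    have hterm : ∀ j : Fin 3,
        ((if starWord 3 j.succ (n+1) (Fin.cons i.succ z) = Fin.cons i'.succ z' then (1:ℝ) else 0) +
         (if starWord 3 j.succ (n+1) (Fin.cons i'.succ z') = Fin.cons i.succ z then (1:ℝ) else 0)) =
        (if j = i then 0 else if i = i' ∧ z = z' then (1:ℝ) else 0) +
        (if j = i' then 0 else if i = i' ∧ z = z' then (1:ℝ) else 0) := by
      intro j
      have hcc : ((i' = i ∧ z' = z) ↔ (i = i' ∧ z = z')) := by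
        constructor <;> rintro ⟨a, b⟩ <;> exact ⟨a.symm, b.symm⟩
      rcases eq_or_ne j i with rfl | h1
      · rcases eq_or_ne j i' with rfl | h2
        · simp [starWord_cons, Fin.succ_ne_zero, zero_ne_succ', Fin.cons_inj]
        · simp [starWord_cons, Fin.succ_ne_zero, zero_ne_succ', Fin.cons_inj,
            Fin.succ_inj, h2, h2.symm, hcc]
      · rcases eq_or_ne j i' with rfl | h2
        · simp [starWord_cons, Fin.succ_ne_zero, zero_ne_succ', Fin.cons_inj,
            Fin.succ_inj, h1, h1.symm, hcc]
        · simp [starWord_cons, Fin.succ_ne_zero, zero_ne_succ', Fin.cons_inj,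
            Fin.succ_inj, h1, h1.symm, h2, h2.symm, hcc]
    have hsum : ∀ (c : ℝ) (a : Fin 3), (∑ j : Fin 3, if j = a then (0:ℝ) else c) = 2 * c := by
      intro c a
      have h1 : ∀ j : Fin 3, (if j = a then (0:ℝ) else c) = c - (if j = a then c else 0) := by
        intro j; split <;> ring
      rw [Finset.sum_congr rfl (fun j _ => h1 j), Finset.sum_sub_distrib, Finset.sum_const,
        Finset.sum_ite_eq']
      simp [Finset.card_univ]
      ring
    rw [Matrix.submatrix_apply]
    have e1 : splitE n (Sum.inr (i, z)) = Fin.cons i.succ z := rfl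
    have e2 : splitE n (Sum.inr (i', z')) = Fin.cons i'.succ z' := rfl
    rw [e1, e2, starAdj_apply, Finset.sum_congr rfl (fun j _ => hterm j), Finset.sum_add_distrib,
      hsum _ i, hsum _ i']
    by_cases hc : i = i' ∧ z = z'
    · obtain ⟨rfl, rfl⟩ := hc
      simp [fromBlocks, Matrix.smul_apply, Matrix.one_apply]
      norm_num
    · simp [hc, fromBlocks, Matrix.smul_apply, Matrix.one_apply, Prod.ext_iff]

lemma RRt (n : ℕ) : starR n * (starR n)ᵀ = starAdj 3 n + (6 : ℝ) • 1 := by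
  have h1 : starR n * (starR n)ᵀ =
      ∑ i : Fin 3, (starMat 3 n i.succ + 1) * (starMat 3 n i.succ + 1)ᵀ := by
    ext y y'
    rw [Matrix.mul_apply, Fintype.sum_prod_type, Matrix.sum_apply]
    refine Finset.sum_congr rfl fun i _ => ?_
    rw [Matrix.mul_apply]
    refine Finset.sum_congr rfl fun z _ => ?_
    rfl
  rw [h1]
  have h2 : ∀ i : Fin 3, (starMat 3 n i.succ + 1) * (starMat 3 n i.succ + 1)ᵀ =
      (starMat 3 n i.succ + (starMat 3 n i.succ)ᵀ) + (2:ℝ) • (1 : Matrix _ _ ℝ) := by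
    intro i
    rw [Matrix.transpose_add, Matrix.transpose_one, add_mul, mul_add, mul_add,
      starMat_mul_transpose 3 n i.succ (Fin.succ_ne_zero i), mul_one, one_mul, one_mul]
    module
  rw [Finset.sum_congr rfl fun i _ => h2 i, Finset.sum_add_distrib, ← starAdj,
    Finset.sum_const, Finset.card_univ]
  rw [Fintype.card_fin]
  module

lemma charmatrix_block (n : ℕ) :
    charmatrix (fromBlocks 0 (starR n) (starR n)ᵀ ((4 : ℝ) • 1)) =
      fromBlocks ((X : ℝ[X]) • 1) (-(starR n).map C) (-((starR n)ᵀ.map C)) ((X - C 4 : ℝ[X]) • 1) := by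
  ext a b
  rcases a with y | t <;> rcases b with y' | t'
  · by_cases h : y = y'
    · subst h
      simp [charmatrix_apply_eq, fromBlocks, Matrix.smul_apply, Matrix.one_apply]
    · simp [charmatrix_apply_ne _ _ _ (fun he => h (Sum.inl.inj he)), fromBlocks,
        Matrix.smul_apply, Matrix.one_apply, h]
  · rw [charmatrix_apply_ne _ _ _ (show (Sum.inl y : _ ⊕ _) ≠ Sum.inr t' by simp)]
    simp [fromBlocks]
  · rw [charmatrix_apply_ne _ _ _ (show (Sum.inr t : _ ⊕ _) ≠ Sum.inl y' by simp)]
    simp [fromBlocks]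
  · by_cases h : t = t'
    · subst h
      simp [charmatrix_apply_eq, fromBlocks, Matrix.smul_apply, Matrix.one_apply]
    · simp [charmatrix_apply_ne _ _ _ (fun he => h (Sum.inr.inj he)), fromBlocks,
        Matrix.smul_apply, Matrix.one_apply, h]

lemma smul_one_map_C {Y : Type*} [Fintype Y] [DecidableEq Y] (c : ℝ) :
    ((c • 1 : Matrix Y Y ℝ)).map C = (C c) • (1 : Matrix Y Y ℝ[X]) := by
  ext a b
  by_cases h : a = b <;>
    simp [Matrix.map_apply, Matrix.smul_apply, Matrix.one_apply, h]

lemma det_poly_sub (n : ℕ) (F : ℝ[X]) :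
    ((F • (1 : Matrix (Fin n → Fin 4) (Fin n → Fin 4) ℝ[X])) - (starAdj 3 n).map C).det
      = (starAdj 3 n).charpoly.comp F := by
  have h : (eval₂RingHom C F).mapMatrix (charmatrix (starAdj 3 n))
      = F • 1 - (starAdj 3 n).map C := by
    ext a b
    by_cases h : a = b
    · subst h
      simp [charmatrix_apply_eq, Matrix.smul_apply, Matrix.one_apply]
    · simp [charmatrix_apply_ne _ _ _ h, Matrix.smul_apply, Matrix.one_apply, h]
  rw [← h, ← RingHom.map_det, Matrix.charpoly]
  rfl

lemma charpoly_succ (n : ℕ) :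
    (starAdj 3 (n + 1)).charpoly =
      (X - C 4) ^ (2 * 4 ^ n) *
        ((starAdj 3 n).charpoly.comp (X ^ 2 - C 4 * X - C 6)) := by
  classical
  set F : ℝ[X] := X ^ 2 - C 4 * X - C 6 with hF
  have cardY : Fintype.card (Fin n → Fin 4) = 4 ^ n := by
    simp [Fintype.card_fun]
  have cardT : Fintype.card (Fin 3 × (Fin n → Fin 4)) = 3 * 4 ^ n := by
    simp [Fintype.card_fun]
  have h0 : reindex (splitE n) (splitE n)
      ((starAdj 3 (n+1)).submatrix (splitE n) (splitE n)) = starAdj 3 (n+1) := by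
    ext u v
    simp [Matrix.reindex_apply, Matrix.submatrix_apply]
  have h1 : (starAdj 3 (n+1)).charpoly
      = (fromBlocks 0 (starR n) (starR n)ᵀ ((4:ℝ) • 1)).charpoly := by
    conv_lhs => rw [← h0]
    rw [Matrix.charpoly_reindex, adj_submatrix n]
  set U : Matrix ((Fin n → Fin 4) ⊕ (Fin 3 × (Fin n → Fin 4)))
      ((Fin n → Fin 4) ⊕ (Fin 3 × (Fin n → Fin 4))) ℝ[X] :=
    fromBlocks ((X - C 4 : ℝ[X]) • 1) 0 (((starR n)ᵀ).map C)
      (1 : Matrix (Fin 3 × (Fin n → Fin 4)) (Fin 3 × (Fin n → Fin 4)) ℝ[X]) with hUdef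
  have hMU : charmatrix (fromBlocks 0 (starR n) (starR n)ᵀ ((4:ℝ) • 1)) * U =
      fromBlocks (F • 1 - (starAdj 3 n).map C) (-(starR n).map C) 0
        ((X - C 4 : ℝ[X]) • 1) := by
    rw [charmatrix_block n, hUdef, Matrix.fromBlocks_multiply, Matrix.fromBlocks_inj]
    refine ⟨?_, ?_, ?_, ?_⟩
    · rw [Matrix.smul_mul, Matrix.mul_smul, one_mul, smul_smul, Matrix.neg_mul,
        ← Matrix.map_mul, RRt n, hF]
      refine Matrix.ext fun a b => ?_
      by_cases h : a = b <;>
        simp [Matrix.add_apply, Matrix.neg_apply, Matrix.smul_apply, Matrix.sub_apply,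
          Matrix.map_apply, Matrix.one_apply, h, smul_eq_mul, map_add] <;>
        ring
    · rw [Matrix.mul_zero, zero_add, Matrix.mul_one]
    · simp only [Matrix.mul_smul, Matrix.smul_mul, Matrix.mul_one, Matrix.one_mul, one_mul,
        mul_one, smul_neg, neg_add_cancel]
    · rw [Matrix.mul_zero, zero_add, Matrix.mul_one]
  have hU : U.det = (X - C 4) ^ (4 ^ n) := by
    rw [hUdef, Matrix.det_fromBlocks_zero₁₂, Matrix.det_one, mul_one, Matrix.det_smul,
      Matrix.det_one, mul_one, cardY]
  have hD : ((X - C 4 : ℝ[X]) •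
      (1 : Matrix (Fin 3 × (Fin n → Fin 4)) (Fin 3 × (Fin n → Fin 4)) ℝ[X])).det
      = (X - C 4) ^ (3 * 4 ^ n) := by
    rw [Matrix.det_smul, Matrix.det_one, mul_one, cardT]
  have key : (starAdj 3 (n+1)).charpoly * (X - C 4) ^ (4 ^ n) =
      ((starAdj 3 n).charpoly.comp F) * (X - C 4) ^ (3 * 4 ^ n) := by
    rw [h1, Matrix.charpoly, ← hU, ← Matrix.det_mul, hMU, Matrix.det_fromBlocks_zero₂₁,
      det_poly_sub n F, hD]
  have hne : ((X : ℝ[X]) - C 4) ^ (4 ^ n) ≠ 0 :=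
    pow_ne_zero _ (Polynomial.X_sub_C_ne_zero 4)
  apply mul_right_cancel₀ hne
  rw [key, show 3 * 4 ^ n = 2 * 4 ^ n + 4 ^ n by ring, pow_add]
  ring

lemma polyIter_comp (F : ℝ[X]) (i : ℕ) : (polyIter F i).comp F = polyIter F (i + 1) := by
  induction i with
  | zero => simp [polyIter]
  | succ i ih =>
    rw [polyIter, Polynomial.comp_assoc, ih]
    rfl

lemma base_case : (starAdj 3 0).charpoly = X - C 6 := by
  rw [Matrix.charpoly, Matrix.det_unique, charmatrix_apply_eq]
  congr 1
  have hw : ∀ (w : Fin 0 → Fin 4) (j : Fin 4), starWord 3 j 0 w = w := fun _ _ => rfl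
  rw [starAdj_apply]
  simp only [hw, if_pos rfl]
  rw [Finset.sum_const, Finset.card_univ, Fintype.card_fin]
  norm_num

lemma master (n : ℕ) :
    (starAdj 3 n).charpoly =
      (X - C 6) *
        (∏ i ∈ Finset.range n, (polyIter (X ^ 2 - C 4 * X - C 6) i + C 2)) *
        (∏ i ∈ Finset.range n,
          (polyIter (X ^ 2 - C 4 * X - C 6) i - C 4) ^ (2 * 4 ^ (n - i - 1))) := by
  induction n with
  | zero => simp [base_case]
  | succ n ih =>
    rw [charpoly_succ n, ih]
    rw [Polynomial.mul_comp, Polynomial.mul_comp, Polynomial.prod_comp, Polynomial.prod_comp,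
      Polynomial.sub_comp, Polynomial.X_comp, Polynomial.C_comp]
    simp only [Polynomial.add_comp, Polynomial.sub_comp, Polynomial.pow_comp,
      Polynomial.C_comp, polyIter_comp]
    rw [Finset.prod_range_succ' (fun i => polyIter (X ^ 2 - C 4 * X - C 6) i + C 2) n,
      Finset.prod_range_succ'
        (fun i => (polyIter (X ^ 2 - C 4 * X - C 6) i - C 4) ^ (2 * 4 ^ (n + 1 - i - 1))) n]
    simp only [Nat.succ_sub_succ, polyIter, Nat.add_sub_cancel, Nat.sub_zero]
    have hfac : (X ^ 2 - C 4 * X - C 6 - C 6 : ℝ[X]) = (X - C 6) * (X + C 2) := by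
      simp only [map_ofNat]
      ring
    rw [hfac]
    ring


/-- For `p = 3` and every `n ≥ 1`, with `F = X² − 4X − 6`:
`P_n = (X − 6) · ∏_{i=0}^{n−1} (F^{∘i} + 2) · ∏_{i=0}^{n−1} (F^{∘i} − 4)^{2·4^{n−i−1}}`. -/
theorem stmt1 (n : ℕ) (hn : 1 ≤ n) :
    (starAdj 3 n).charpoly =
      (X - C 6) *
        (∏ i ∈ Finset.range n, (polyIter (X ^ 2 - C 4 * X - C 6) i + C 2)) *
        (∏ i ∈ Finset.range n,
          (polyIter (X ^ 2 - C 4 * X - C 6) i - C 4) ^ (2 * 4 ^ (n - i - 1))) := by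
  exact master n
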